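/- For a simply laced root system and a dominant weight λ, the firing span equals the span of the simple roots that actually get fired along dominant firing sequences: FS_{Φ⁺}(λ) = Span_ℝ{αᵢ : there exists μ with λ →* μ and μ → μ + αᵢ}. -/

import Mathlib

open scoped RealInnerProductSpace

noncomputable section

namespace CF

variable {V : Type*} [NormedAddCommGroup V] [InnerProductSpace ℝ V]

/-- The coroot `α∨ = 2α/⟨α,α⟩`. -/
def coroot (α : V) : V := (2 / ⟪α, α⟫) • α

/-- A reduced crystallographic root system in `V`. -/
def IsRootSystem (Φ : Set V) : Prop :=
  Φ.Finite ∧ (0 : V) ∉ Φ ∧ Submodule.span ℝ Φ = ⊤ ∧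
    (∀ α ∈ Φ, ∀ β ∈ Φ, β - ⟪β, coroot α⟫ • α ∈ Φ) ∧
    (∀ α ∈ Φ, ∀ t : ℝ, t • α ∈ Φ → t = 1 ∨ t = -1) ∧
    (∀ α ∈ Φ, ∀ β ∈ Φ, ∃ n : ℤ, ⟪β, coroot α⟫ = (n : ℝ))

/-- A choice of positive roots `Φ⁺ ⊆ Φ` (exactly one of `±α` is positive, and the positive
roots lie strictly on one side of a hyperplane). -/
def IsPositiveSystem (Φ Φp : Set V) : Prop :=
  Φp ⊆ Φ ∧ (∀ α ∈ Φ, (α ∈ Φp ∨ -α ∈ Φp) ∧ ¬(α ∈ Φp ∧ -α ∈ Φp)) ∧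
    ∃ ℓ : V →ₗ[ℝ] ℝ, ∀ α ∈ Φp, 0 < ℓ α

/-- The weight lattice `P = {v : ⟨v, α∨⟩ ∈ ℤ for all α ∈ Φ}`. -/
def weightLattice (Φ : Set V) : Set V :=
  {v | ∀ α ∈ Φ, ∃ n : ℤ, ⟪v, coroot α⟫ = (n : ℝ)}

/-- Central-firing: `λ → λ + α` whenever `α ∈ Φ⁺` and `⟨λ, α∨⟩ = 0`. -/
def fire (Φp : Set V) (lam mu : V) : Prop :=
  ∃ α ∈ Φp, ⟪lam, coroot α⟫ = 0 ∧ mu = lam + α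

/-- The Weyl group: the group of linear isometries generated by the reflections `s_α`, `α ∈ Φ`. -/
def weylGroup (Φ : Set V) : Subgroup (V ≃ₗᵢ[ℝ] V) :=
  Subgroup.closure {g | ∃ α ∈ Φ, ∀ v, g v = v - ⟪v, coroot α⟫ • α}

/-- `v` and `w` lie in the same Weyl group orbit. -/
def sameOrbit (Φ : Set V) (v w : V) : Prop := ∃ g ∈ weylGroup Φ, g v = w

def weylOrbit (Φ : Set V) (v : V) : Set V := {w | sameOrbit Φ v w}

/-- The root lattice `Q`. -/
def rootLattice (Φ : Set V) : AddSubgroup V := AddSubgroup.closure Φ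

/-- `Π^Q(λ)`: the points of the permutohedron `Π(λ) = ConvexHull(Wλ)` lying in `λ + Q`. -/
def permQ (Φ : Set V) (lam : V) : Set V :=
  {mu | mu ∈ convexHull ℝ (weylOrbit Φ lam) ∧ lam - mu ∈ rootLattice Φ}

def IsDominant (Δ : Set V) (lam : V) : Prop := ∀ a ∈ Δ, 0 ≤ ⟪lam, coroot a⟫

def IsStrictlyDominant (Δ : Set V) (lam : V) : Prop := ∀ a ∈ Δ, 0 < ⟪lam, coroot a⟫

/-- A minuscule weight: a nonzero dominant weight whose `Π^Q` consists of its Weyl orbit. -/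
def IsMinuscule (Φ Δ : Set V) (w : V) : Prop :=
  w ≠ 0 ∧ IsDominant Δ w ∧ ∀ mu ∈ permQ Φ w, sameOrbit Φ w mu

/-- `Δ` is a system of simple roots for the positive system `Φ⁺`. -/
def IsSimpleSystem (Φp : Set V) (Δ : Finset V) : Prop :=
  (Δ : Set V) ⊆ Φp ∧ LinearIndependent ℝ (fun a : (Δ : Set V) => (a : V)) ∧
    ∀ α ∈ Φp, ∃ c : V → ℝ, (∀ a ∈ Δ, 0 ≤ c a) ∧ α = ∑ a ∈ Δ, c a • a

def IsSimplyLaced (Φ : Set V) : Prop := ∀ α ∈ Φ, ∀ β ∈ Φ, ⟪α, α⟫ = ⟪β, β⟫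

/-- Irreducibility: `Φ` cannot be split into two nonempty mutually orthogonal parts. -/
def IsIrreducibleRS (Φ : Set V) : Prop :=
  ¬ ∃ S T : Set V, S.Nonempty ∧ T.Nonempty ∧ S ∪ T = Φ ∧ ∀ a ∈ S, ∀ b ∈ T, ⟪a, b⟫ = 0

/-- The firing span `FS_S(λ) = Span_ℝ{μ − λ : λ →* μ}`. -/
def firingSpan (Φp : Set V) (lam : V) : Submodule ℝ V :=
  Submodule.span ℝ {d | ∃ mu, Relation.ReflTransGen (fire Φp) lam mu ∧ d = mu - lam}

/-- Central-firing on Weyl orbits: `Wλ → Wμ` iff some representatives fire. -/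
def ofire (Φ Φp : Set V) (lam mu : V) : Prop :=
  ∃ lam' mu', sameOrbit Φ lam lam' ∧ sameOrbit Φ mu mu' ∧ fire Φp lam' mu'

/-- Connectivity of roots within a subset `Ψ` (via non-orthogonality). -/
def sameComponent (Ψ : Set V) (β γ : V) : Prop :=
  Relation.ReflTransGen (fun x y => x ∈ Ψ ∧ y ∈ Ψ ∧ ⟪x, y⟫ ≠ 0) β γ

/-- Confluence of central-firing from `λ`: all maximal firing sequences from `λ`
terminate at the same weight. -/
def ConfluentFrom (S : Set V) (lam : V) : Prop :=
  ∀ mu₁ mu₂ : V, Relation.ReflTransGen (fire S) lam mu₁ → (¬ ∃ ν, fire S mu₁ ν) →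
    Relation.ReflTransGen (fire S) lam mu₂ → (¬ ∃ ν, fire S mu₂ ν) → mu₁ = mu₂

/-- Pairing with the coroot, unfolded. -/
lemma inner_coroot (v γ : V) : ⟪v, coroot γ⟫ = 2 / ⟪γ, γ⟫ * ⟪v, γ⟫ := by
  simp [coroot, real_inner_smul_right]

lemma inner_self_pos' {γ : V} (hγ : γ ≠ 0) : (0:ℝ) < ⟪γ, γ⟫ :=
  lt_of_le_of_ne real_inner_self_nonneg (Ne.symm (inner_self_ne_zero.2 hγ))

lemma inner_coroot_eq_zero_iff {v γ : V} (hγ : γ ≠ 0) :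
    ⟪v, coroot γ⟫ = 0 ↔ ⟪v, γ⟫ = 0 := by
  have hq : ⟪γ, γ⟫ ≠ 0 := inner_self_ne_zero.2 hγ
  rw [inner_coroot]
  constructor
  · intro h
    rcases mul_eq_zero.1 h with h | h
    · exact absurd h (by positivity)
    · exact h
  · intro h; rw [h, mul_zero]

lemma self_inner_coroot {γ : V} (hγ : γ ≠ 0) : ⟪γ, coroot γ⟫ = 2 := by
  have hq : ⟪γ, γ⟫ ≠ 0 := inner_self_ne_zero.2 hγ
  rw [inner_coroot]; field_simp

@[simp] lemma coroot_neg (γ : V) : coroot (-γ) = -coroot γ := by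
  simp [coroot]

/-- Reflection in the hyperplane orthogonal to `γ`, as a linear map. -/
def rfl' (γ : V) : V →ₗ[ℝ] V where
  toFun v := v - ⟪v, coroot γ⟫ • γ
  map_add' x y := by simp [inner_add_left, add_smul]; abel
  map_smul' c x := by simp [real_inner_smul_left, mul_smul]; module

@[simp] lemma rfl'_apply (γ v : V) : rfl' γ v = v - ⟪v, coroot γ⟫ • γ := rfl

lemma rfl'_inner (γ : V) (hγ : γ ≠ 0) (x y : V) : ⟪rfl' γ x, rfl' γ y⟫ = ⟪x, y⟫ := by
  have hq : ⟪γ, γ⟫ ≠ 0 := inner_self_ne_zero.2 hγ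
  simp only [rfl'_apply, inner_coroot, inner_sub_left, inner_sub_right,
    real_inner_smul_left, real_inner_smul_right]
  rw [real_inner_comm γ x, real_inner_comm γ y]
  field_simp
  ring


/-- for a simply laced root system and a dominant weight `λ`, the firing span
equals the span of the simple roots that get fired along firing sequences from `λ`. -/
theorem firingSpan_eq_span_fired_simples (Φ Φp Δ : Finset V)
    (hΦ : IsRootSystem (Φ : Set V)) (hp : IsPositiveSystem (Φ : Set V) (Φp : Set V))
    (hΔ : IsSimpleSystem (Φp : Set V) Δ)
    (hsl : IsSimplyLaced (Φ : Set V)) (hirr : IsIrreducibleRS (Φ : Set V))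
    (lam : V) (hlam : lam ∈ weightLattice (Φ : Set V))
    (hdom : IsDominant (Δ : Set V) lam) :
    firingSpan (Φp : Set V) lam =
      Submodule.span ℝ {a : V | a ∈ Δ ∧
        ∃ mu, Relation.ReflTransGen (fire (Φp : Set V)) lam mu ∧
          fire (Φp : Set V) mu (mu + a)} := by
  classical
  obtain ⟨-, h0, -, hreflax, -, hint⟩ := hΦ
  obtain ⟨hsub, hpm, ℓ, hℓ⟩ := hp
  obtain ⟨hΔp, -, hposc⟩ := hΔ
  have hΦne0 : ∀ γ ∈ (Φ : Finset V), γ ≠ (0:V) := by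
    intro γ hγ h; exact h0 (by simpa [h] using (Finset.mem_coe.2 hγ : γ ∈ (Φ:Set V)))
  set G : Set V := {a : V | a ∈ Δ ∧
      ∃ mu, Relation.ReflTransGen (fire (Φp : Set V)) lam mu ∧
        fire (Φp : Set V) mu (mu + a)} with hG
  set U : Submodule ℝ V := Submodule.span ℝ G with hUdef
  -- The key lemma: every reachable weight has a dominant "shadow" related by a good map.
  have key : ∀ μ : V, Relation.ReflTransGen (fire (Φp : Set V)) lam μ →
      ∃ (ν : V) (w : V →ₗ[ℝ] V),
        Relation.ReflTransGen (fire (Φp : Set V)) lam ν ∧ IsDominant (Δ : Set V) ν ∧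
        ν ∈ weightLattice (Φ : Set V) ∧ ν - lam ∈ U ∧
        (∀ x y : V, ⟪w x, w y⟫ = ⟪x, y⟫) ∧ (∀ γ ∈ (Φ : Set V), w γ ∈ (Φ : Set V)) ∧
        (∀ v : V, w v - v ∈ U) ∧ w μ = ν := by
    intro μ h
    induction h with
    | refl =>
        exact ⟨lam, LinearMap.id, .refl, hdom, hlam, by simp, by simp, fun γ hγ => hγ,
          by simp, rfl⟩
    | @tail mu mu2 hab hbc ih =>
        obtain ⟨α, hαp, hα0, rfl⟩ := hbc
        obtain ⟨ν, w, hνr, hνdom, hνP, hνU, wP1, wP2, wP3, wμ⟩ := ih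
        have hαΦ : α ∈ (Φ : Set V) := hsub hαp
        have hα0' : α ≠ 0 := hΦne0 α (by exact_mod_cast hαΦ)
        have hμα : ⟪mu, α⟫ = 0 := (inner_coroot_eq_zero_iff hα0').1 hα0
        set β : V := w α with hβdef
        have hβΦ : β ∈ (Φ : Set V) := wP2 α hαΦ
        have hβ0 : β ≠ 0 := hΦne0 β (by exact_mod_cast hβΦ)
        have hνβ : ⟪ν, β⟫ = 0 := by
          rw [← wμ, hβdef, wP1, hμα]
        -- Φ is closed under negation
        have hneg : ∀ γ ∈ (Φ : Set V), -γ ∈ (Φ : Set V) := by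
          intro γ hγ
          have h2 := hreflax γ hγ γ hγ
          rw [self_inner_coroot (hΦne0 γ (by exact_mod_cast hγ))] at h2
          have : γ - (2:ℝ) • γ = -γ := by module
          rwa [this] at h2
        -- pick a positive representative β'
        obtain ⟨β', hβ'p, hβ'pm⟩ : ∃ β' ∈ (Φp : Set V), β' = β ∨ β' = -β := by
          rcases (hpm β hβΦ).1 with h | h
          · exact ⟨β, h, Or.inl rfl⟩
          · exact ⟨-β, h, Or.inr rfl⟩
        have hβ'Φ : β' ∈ (Φ : Set V) := hsub hβ'p
        have hβ'0 : β' ≠ 0 := hΦne0 β' (by exact_mod_cast hβ'Φ)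
        have hνβ' : ⟪ν, β'⟫ = 0 := by
          rcases hβ'pm with h | h
          · rw [h]; exact hνβ
          · rw [h, inner_neg_right, hνβ, neg_zero]
        -- dominance in plain inner products
        have hdν : ∀ a ∈ Δ, (0:ℝ) ≤ ⟪ν, a⟫ := by
          intro a ha
          have h1 := hνdom a (Finset.mem_coe.2 ha)
          have h2 : a ≠ 0 := hΦne0 a (by exact_mod_cast hsub (hΔp (Finset.mem_coe.2 ha)))
          rw [inner_coroot] at h1
          have hq : (0:ℝ) < ⟪a, a⟫ := inner_self_pos' h2
          have h3 : (0:ℝ) < 2 / ⟪a, a⟫ := by positivity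
          exact (mul_nonneg_iff_of_pos_left h3).1 h1
        -- support of β' is orthogonal to ν
        obtain ⟨c, hc0, hcs⟩ := hposc β' hβ'p
        have hsum0 : ∑ a ∈ Δ, c a * ⟪ν, a⟫ = 0 := by
          have : ⟪ν, β'⟫ = ∑ a ∈ Δ, c a * ⟪ν, a⟫ := by
            rw [hcs, inner_sum]
            exact Finset.sum_congr rfl fun a _ => by rw [real_inner_smul_right]
          rw [← this]; exact hνβ'
        have hterm0 : ∀ a ∈ Δ, c a * ⟪ν, a⟫ = 0 :=
          fun a ha => (Finset.sum_eq_zero_iff_of_nonneg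
            (fun b hb => mul_nonneg (hc0 b hb) (hdν b hb))).1 hsum0 a ha
        -- the parabolic support J
        set J : Set V := {a | a ∈ Δ ∧ ⟪ν, a⟫ = 0} with hJdef
        have hJΦ : ∀ a ∈ J, a ∈ (Φ : Set V) := fun a ha => hsub (hΔp (Finset.mem_coe.2 ha.1))
        have hJG : ∀ a ∈ J, a ∈ G := by
          rintro a ⟨haΔ, haν⟩
          refine ⟨haΔ, ν, hνr, a, hΔp (Finset.mem_coe.2 haΔ), ?_, rfl⟩
          exact (inner_coroot_eq_zero_iff (hΦne0 a (by exact_mod_cast hsub (hΔp (Finset.mem_coe.2 haΔ))))).2 haν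
        have hJU : ∀ a ∈ J, a ∈ U := fun a ha => Submodule.subset_span (hJG a ha)
        have hβ'U : β' ∈ U := by
          rw [hcs]
          refine Submodule.sum_mem U fun a ha => ?_
          by_cases hz : ⟪ν, a⟫ = 0
          · exact Submodule.smul_mem U _ (hJU a ⟨ha, hz⟩)
          · have hca : c a = 0 := by
              rcases mul_eq_zero.1 (hterm0 a ha) with h | h
              · exact h
              · exact absurd h hz
            rw [hca, zero_smul]; exact Submodule.zero_mem U
        -- orbit of β' under reflections in J
        set Stp : V → V → Prop := fun x y => ∃ a ∈ J, y = x - ⟪x, coroot a⟫ • a with hStp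
        have horb : ∀ x, Relation.ReflTransGen Stp β' x →
            x ∈ (Φ : Set V) ∧ ⟪ν, x⟫ = 0 ∧ x ∈ U := by
          intro x hx
          induction hx with
          | refl => exact ⟨hβ'Φ, hνβ', hβ'U⟩
          | tail h1 h2 ih2 =>
              obtain ⟨a, haJ, rfl⟩ := h2
              obtain ⟨hyΦ, hyν, hyU⟩ := ih2
              refine ⟨hreflax a (hJΦ a haJ) _ hyΦ, ?_, ?_⟩
              · rw [inner_sub_right, real_inner_smul_right, hyν, haJ.2, mul_zero, sub_zero]
              · exact Submodule.sub_mem U hyU (Submodule.smul_mem U _ (hJU a haJ))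
        have hOfin : Set.Finite {x | Relation.ReflTransGen Stp β' x} :=
          Φ.finite_toSet.subset fun x hx => (horb x hx).1
        have hOne : Relation.ReflTransGen Stp β' β' := Relation.ReflTransGen.refl
        obtain ⟨θ, hθO, hθmax⟩ : ∃ θ ∈ {x | Relation.ReflTransGen Stp β' x},
            ∀ x ∈ {x | Relation.ReflTransGen Stp β' x}, ℓ θ ≤ ℓ x → ℓ θ = ℓ x := by
          obtain ⟨θ, hθ1, hθ2⟩ := Set.Finite.exists_maximalFor ℓ _ hOfin ⟨β', hOne⟩
          exact ⟨θ, hθ1, fun x hx h => le_antisymm h (hθ2 hx h)⟩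
        have hmax' : ∀ x, Relation.ReflTransGen Stp β' x → ℓ x ≤ ℓ θ := by
          intro x hx
          rcases le_total (ℓ x) (ℓ θ) with h | h
          · exact h
          · exact le_of_eq (hθmax x hx h).symm
        obtain ⟨hθΦ, hθν, hθU⟩ := horb θ hθO
        have hθ0 : θ ≠ 0 := hΦne0 θ (by exact_mod_cast hθΦ)
        -- θ is dominant on J
        have hθJ : ∀ a ∈ J, (0:ℝ) ≤ ⟪θ, coroot a⟫ := by
          intro a haJ
          by_contra hneg'
          push_neg at hneg'
          have hy := hmax' _ (hθO.tail ⟨a, haJ, rfl⟩)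
          have hℓa : 0 < ℓ a := hℓ a (hΔp (Finset.mem_coe.2 haJ.1))
          rw [map_sub, map_smul, smul_eq_mul] at hy
          nlinarith
        -- θ is positive
        have hθp : θ ∈ (Φp : Set V) := by
          rcases (hpm θ hθΦ).1 with h | h
          · exact h
          · exfalso
            have h1 := hℓ _ h
            have h2 := hℓ β' hβ'p
            have h3 := hmax' β' hOne
            rw [map_neg] at h1
            linarith
        have hfireθ : fire (Φp : Set V) ν (ν + θ) :=
          ⟨θ, hθp, (inner_coroot_eq_zero_iff hθ0).2 hθν, rfl⟩
        have hνθr : Relation.ReflTransGen (fire (Φp : Set V)) lam (ν + θ) := hνr.tail hfireθ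
        have hνθP : ν + θ ∈ weightLattice (Φ : Set V) := by
          intro γ hγ
          obtain ⟨n, hn⟩ := hνP γ hγ
          obtain ⟨m, hm⟩ := hint γ hγ θ hθΦ
          exact ⟨n + m, by rw [inner_add_left, hn, hm]; push_cast; ring⟩
        -- ν + θ is dominant
        have hνθdom : IsDominant (Δ : Set V) (ν + θ) := by
          intro b hb
          have hbΔ : b ∈ Δ := Finset.mem_coe.1 hb
          have hbΦ : b ∈ (Φ : Set V) := hsub (hΔp hb)
          have hb0 : b ≠ 0 := hΦne0 b (by exact_mod_cast hbΦ)
          rw [inner_add_left]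
          by_cases hbJ : ⟪ν, b⟫ = 0
          · have h1 : ⟪ν, coroot b⟫ = 0 := (inner_coroot_eq_zero_iff hb0).2 hbJ
            have h2 := hθJ b ⟨hbΔ, hbJ⟩
            linarith
          · obtain ⟨k, hk⟩ := hνP b hbΦ
            have hkpos : (0:ℝ) < ⟪ν, coroot b⟫ :=
              lt_of_le_of_ne (hνdom b hb)
                (fun hcontra => hbJ ((inner_coroot_eq_zero_iff hb0).1 hcontra.symm))
            have hk1 : (1:ℝ) ≤ ⟪ν, coroot b⟫ := by
              rw [hk] at hkpos ⊢
              exact_mod_cast (by exact_mod_cast hkpos : (0:ℤ) < k)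
            obtain ⟨m, hm⟩ := hint b hbΦ θ hθΦ
            have hm1 : (-1:ℝ) ≤ ⟪θ, coroot b⟫ := by
              by_contra hmc
              push_neg at hmc
              have hm2 : (m:ℝ) ≤ -2 := by
                rw [hm] at hmc
                have : m < -1 := by exact_mod_cast hmc
                exact_mod_cast (by omega : m ≤ -2)
              have hslθb : ⟪θ, θ⟫ = ⟪b, b⟫ := hsl θ hθΦ b hbΦ
              have hbq : (0:ℝ) < ⟪b, b⟫ := inner_self_pos' hb0
              have hub : ⟪θ, b⟫ = ⟪θ, coroot b⟫ * ⟪b, b⟫ / 2 := by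
                rw [inner_coroot]
                field_simp
              have hexp : ⟪θ + b, θ + b⟫ = ⟪b, b⟫ * (2 + ⟪θ, coroot b⟫) := by
                rw [real_inner_add_add_self, hslθb, hub]
                ring
              have hge : (0:ℝ) ≤ ⟪θ + b, θ + b⟫ := real_inner_self_nonneg
              have htm2 : ⟪θ, coroot b⟫ = -2 := by
                rw [hexp] at hge
                have hge2 : (-2:ℝ) ≤ ⟪θ, coroot b⟫ := by
                  by_contra hcon
                  push_neg at hcon
                  nlinarith
                rw [hm] at hge2 ⊢
                linarith
              have hθb0 : θ + b = 0 := inner_self_eq_zero.1 (by rw [hexp, htm2]; ring)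
              have hbθ : -b = θ := by
                have h6 : b + θ = 0 := by rw [add_comm]; exact hθb0
                exact neg_eq_of_add_eq_zero_right h6
              exact (hpm b hbΦ).2 ⟨hΔp hb, by rw [hbθ]; exact hθp⟩
            linarith
        have hνθU : ν + θ - lam ∈ U := by
          have h1 := Submodule.add_mem U hνU hθU
          have h2 : ν + θ - lam = ν - lam + θ := by abel
          rwa [h2]
        -- build the map u with u β' = θ
        have hu : ∀ x, Relation.ReflTransGen Stp β' x → ∃ u : V →ₗ[ℝ] V,
            (∀ p q : V, ⟪u p, u q⟫ = ⟪p, q⟫) ∧ (∀ γ ∈ (Φ : Set V), u γ ∈ (Φ : Set V)) ∧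
            (∀ v : V, u v - v ∈ U) ∧ u ν = ν ∧ u β' = x := by
          intro x hx
          induction hx with
          | refl => exact ⟨LinearMap.id, by simp, fun γ hγ => hγ, by simp, rfl, rfl⟩
          | tail h1 h2 ih2 =>
              obtain ⟨a, haJ, rfl⟩ := h2
              obtain ⟨u, u1, u2, u3, u4, u5⟩ := ih2
              have haΦ : a ∈ (Φ : Set V) := hJΦ a haJ
              have ha0 : a ≠ 0 := hΦne0 a (by exact_mod_cast haΦ)
              refine ⟨(rfl' a).comp u, ?_, ?_, ?_, ?_, ?_⟩
              · intro p q
                simp only [LinearMap.comp_apply]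
                rw [rfl'_inner a ha0, u1]
              · intro γ hγ
                simp only [LinearMap.comp_apply, rfl'_apply]
                exact hreflax a haΦ _ (u2 γ hγ)
              · intro v
                have hd : rfl' a (u v) - u v ∈ U := by
                  rw [rfl'_apply]
                  have : u v - ⟪u v, coroot a⟫ • a - u v = -(⟪u v, coroot a⟫ • a) := by abel
                  rw [this]
                  exact Submodule.neg_mem U (Submodule.smul_mem U _ (hJU a haJ))
                have heq : (rfl' a).comp u v - v = rfl' a (u v) - u v + (u v - v) := by
                  simp only [LinearMap.comp_apply]; abel
                rw [heq]
                exact Submodule.add_mem U hd (u3 v)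
              · simp only [LinearMap.comp_apply, u4, rfl'_apply]
                rw [(inner_coroot_eq_zero_iff ha0).2 haJ.2, zero_smul, sub_zero]
              · simp only [LinearMap.comp_apply, u5, rfl'_apply]
        obtain ⟨u, u1, u2, u3, u4, u5⟩ := hu θ hθO
        -- build w1 with w1 (mu + α) = ν + β'
        obtain ⟨w1, w11, w12, w13, hw1⟩ : ∃ w1 : V →ₗ[ℝ] V,
            (∀ p q : V, ⟪w1 p, w1 q⟫ = ⟪p, q⟫) ∧ (∀ γ ∈ (Φ : Set V), w1 γ ∈ (Φ : Set V)) ∧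
            (∀ v : V, w1 v - v ∈ U) ∧ w1 (mu + α) = ν + β' := by
          rcases hβ'pm with hbb | hbb
          · exact ⟨w, wP1, wP2, wP3, by rw [map_add, wμ, ← hβdef, hbb]⟩
          · refine ⟨(rfl' β').comp w, ?_, ?_, ?_, ?_⟩
            · intro p q
              simp only [LinearMap.comp_apply]
              rw [rfl'_inner β' hβ'0, wP1]
            · intro γ hγ
              simp only [LinearMap.comp_apply, rfl'_apply]
              exact hreflax β' hβ'Φ _ (wP2 γ hγ)
            · intro v
              have hd : rfl' β' (w v) - w v ∈ U := by
                rw [rfl'_apply]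
                have : w v - ⟪w v, coroot β'⟫ • β' - w v = -(⟪w v, coroot β'⟫ • β') := by abel
                rw [this]
                exact Submodule.neg_mem U (Submodule.smul_mem U _ hβ'U)
              have heq : (rfl' β').comp w v - v = rfl' β' (w v) - w v + (w v - v) := by
                simp only [LinearMap.comp_apply]; abel
              rw [heq]
              exact Submodule.add_mem U hd (wP3 v)
            · simp only [LinearMap.comp_apply, map_add, wμ, ← hβdef, rfl'_apply]
              have hz : ⟪ν, coroot β'⟫ = 0 := (inner_coroot_eq_zero_iff hβ'0).2 hνβ'
              have hββ' : β = -β' := by rw [hbb, neg_neg]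
              have hc2 : ⟪β, coroot β'⟫ = -2 := by
                rw [hββ', inner_neg_left, self_inner_coroot hβ'0]
              rw [hz, hc2, hββ']
              module
        -- assemble
        refine ⟨ν + θ, u.comp w1, hνθr, hνθdom, hνθP, hνθU, ?_, ?_, ?_, ?_⟩
        · intro p q
          simp only [LinearMap.comp_apply]
          rw [u1, w11]
        · intro γ hγ
          simp only [LinearMap.comp_apply]
          exact u2 _ (w12 γ hγ)
        · intro v
          have h1 : u (w1 v) - w1 v ∈ U := u3 (w1 v)
          have heq : u.comp w1 v - v = u (w1 v) - w1 v + (w1 v - v) := by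
            simp only [LinearMap.comp_apply]; abel
          rw [heq]
          exact Submodule.add_mem U h1 (w13 v)
        · have hval : u.comp w1 (mu + α) = u (ν + β') := by
            rw [LinearMap.comp_apply, hw1]
          rw [hval, map_add, u4, u5]
  -- conclude
  have final : ∀ μ, Relation.ReflTransGen (fire (Φp : Set V)) lam μ → μ - lam ∈ U := by
    intro μ h
    obtain ⟨ν, w, -, -, -, hνU, -, -, wP3, wμ⟩ := key μ h
    have h1 : w μ - μ ∈ U := wP3 μ
    have h2 : μ - lam = ν - lam - (w μ - μ) := by rw [← wμ]; abel
    rw [h2]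
    exact Submodule.sub_mem U hνU h1
  apply le_antisymm
  · rw [firingSpan]
    apply Submodule.span_le.2
    rintro d ⟨mu, hreach, rfl⟩
    exact final mu hreach
  · apply Submodule.span_le.2
    rintro a ⟨haΔ, mu, hreach, hfire⟩
    have h1 : mu - lam ∈ firingSpan (Φp : Set V) lam :=
      Submodule.subset_span ⟨mu, hreach, rfl⟩
    have h2 : mu + a - lam ∈ firingSpan (Φp : Set V) lam :=
      Submodule.subset_span ⟨mu + a, hreach.tail hfire, rfl⟩
    have h3 : a = mu + a - lam - (mu - lam) := by abel
    rw [SetLike.mem_coe, h3]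
    exact Submodule.sub_mem _ h2 h1


end CF
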